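/- Let π, π^h, π^w : Fin d → ℝ with π_n > 0 for all n. Let V ⊆ (Fin d → ℝ) be the span of π^h and π with respect to the standard Euclidean inner product, let P be the orthogonal projection onto V, and define r : Fin d → ℝ by r_n := π_n · (π^w_n − (P π^w)_n). Then: (i) ∑_n r_n = 0; (ii) ∑_n r_n · π_n⁻¹ · π^h_n = 0; (iii) ∑_n r_n · π_n⁻¹ · π^w_n = ‖π^w − P π^w‖² ≥ 0, with strict inequality iff π^w ∉ V. (Hence, for the transition matrix with second eigenvector r, the slowest-decay coefficients satisfy a₂^h = 0 and a₂^w > 0 when π^w ∉ V.) -/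

import Mathlib

open Finset

/-- Construction for Result 5: with `r_n = π_n (π^w_n − (P π^w)_n)`, where `P` is
the orthogonal projection onto the span `V` of `π^h` and `π`, the vector `r` has
zero sum, is orthogonal to `π^h` in the `Π⁻¹` inner product (so `a₂^h = 0`), and
has nonnegative `Π⁻¹`-pairing with `π^w`, strictly positive iff `π^w ∉ V`. -/
theorem projection_construction {d : ℕ}
    (π πh πw : EuclideanSpace ℝ (Fin d)) (hπ : ∀ n, 0 < π n)
    (V : Submodule ℝ (EuclideanSpace ℝ (Fin d)))
    (hV : V = Submodule.span ℝ ({πh, π} : Set (EuclideanSpace ℝ (Fin d))))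
    (r : Fin d → ℝ)
    (hr : ∀ n, r n = π n * (πw n - (V.orthogonalProjection πw : EuclideanSpace ℝ (Fin d)) n)) :
    (∑ n, r n = 0) ∧
    (∑ n, r n * (π n)⁻¹ * πh n = 0) ∧
    (∑ n, r n * (π n)⁻¹ * πw n
        = ‖πw - (V.orthogonalProjection πw : EuclideanSpace ℝ (Fin d))‖ ^ 2) ∧
    (0 ≤ ∑ n, r n * (π n)⁻¹ * πw n) ∧
    (0 < ∑ n, r n * (π n)⁻¹ * πw n ↔ πw ∉ V) := by
  set w : EuclideanSpace ℝ (Fin d) := πw - (V.orthogonalProjection πw : EuclideanSpace ℝ (Fin d)) with hwdef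
  have hworth : w ∈ Vᗮ := Submodule.sub_starProjection_mem_orthogonal (K := V) πw
  have hπmem : π ∈ V := hV ▸ Submodule.subset_span (by simp)
  have hπhmem : πh ∈ V := hV ▸ Submodule.subset_span (by simp)
  have hwn : ∀ n, w n = πw n - (V.orthogonalProjection πw : EuclideanSpace ℝ (Fin d)) n := by
    intro n; rw [hwdef]; rfl
  have hinner : ∀ x : EuclideanSpace ℝ (Fin d), x ∈ V → ∑ n, x n * w n = 0 := by
    intro x hx
    have := (Submodule.mem_orthogonal V w).mp hworth x hx
    simpa [PiLp.inner_apply, RCLike.inner_apply, mul_comm] using this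
  have hproj : ∀ x : EuclideanSpace ℝ (Fin d),
      ∑ n, (π n * w n) * (π n)⁻¹ * x n = ∑ n, w n * x n := by
    intro x
    refine Finset.sum_congr rfl fun n _ => ?_
    field_simp [(hπ n).ne']
  have hkey : ∑ n, w n * πw n = ‖w‖ ^ 2 := by
    have h1 : (∑ n, w n * (V.orthogonalProjection πw : EuclideanSpace ℝ (Fin d)) n) = 0 := by
      have := hinner (V.orthogonalProjection πw : EuclideanSpace ℝ (Fin d))
        (V.orthogonalProjection πw).2
      calc ∑ n, w n * (V.orthogonalProjection πw : EuclideanSpace ℝ (Fin d)) n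
          = ∑ n, (V.orthogonalProjection πw : EuclideanSpace ℝ (Fin d)) n * w n := by
            refine Finset.sum_congr rfl fun n _ => mul_comm _ _
        _ = 0 := this
    have h2 : ‖w‖ ^ 2 = ∑ n, w n * w n := by
      rw [← real_inner_self_eq_norm_sq, PiLp.inner_apply]
      simp only [RCLike.inner_apply, conj_trivial]
    have h3 : ∀ n, w n * πw n = w n * w n + w n * (V.orthogonalProjection πw : EuclideanSpace ℝ (Fin d)) n := by
      intro n; rw [hwn n]; ring
    rw [h2]
    calc ∑ n, w n * πw n
        = ∑ n, (w n * w n + w n * (V.orthogonalProjection πw : EuclideanSpace ℝ (Fin d)) n) :=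
          Finset.sum_congr rfl fun n _ => h3 n
      _ = (∑ n, w n * w n) + ∑ n, w n * (V.orthogonalProjection πw : EuclideanSpace ℝ (Fin d)) n := by
          rw [Finset.sum_add_distrib]
      _ = ∑ n, w n * w n := by rw [h1, add_zero]
  have hrw : ∀ n, r n = π n * w n := fun n => by rw [hr n, hwn n]
  have e1 : ∑ n, r n = 0 := by
    calc ∑ n, r n = ∑ n, π n * w n := Finset.sum_congr rfl fun n _ => hrw n
      _ = 0 := hinner π hπmem
  have e2 : ∑ n, r n * (π n)⁻¹ * πh n = 0 := by
    calc ∑ n, r n * (π n)⁻¹ * πh n = ∑ n, (π n * w n) * (π n)⁻¹ * πh n :=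
          Finset.sum_congr rfl fun n _ => by rw [hrw n]
      _ = ∑ n, w n * πh n := hproj πh
      _ = ∑ n, πh n * w n := Finset.sum_congr rfl fun n _ => mul_comm _ _
      _ = 0 := hinner πh hπhmem
  have e3 : ∑ n, r n * (π n)⁻¹ * πw n = ‖w‖ ^ 2 := by
    calc ∑ n, r n * (π n)⁻¹ * πw n = ∑ n, (π n * w n) * (π n)⁻¹ * πw n :=
          Finset.sum_congr rfl fun n _ => by rw [hrw n]
      _ = ∑ n, w n * πw n := hproj πw
      _ = ‖w‖ ^ 2 := hkey
  refine ⟨e1, e2, e3, by rw [e3]; positivity, ?_⟩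
  rw [e3]
  constructor
  · intro hpos hmem
    have hw0 : w = 0 := by
      rw [hwdef]; simp [Submodule.starProjection_eq_self_iff.mpr hmem]
    rw [hw0] at hpos; simp at hpos
  · intro hmem
    have hw0 : w ≠ 0 := by
      intro h
      apply hmem
      have : πw = (V.orthogonalProjection πw : EuclideanSpace ℝ (Fin d)) := by
        have := sub_eq_zero.mp (hwdef ▸ h)
        exact this
      rw [this]; exact (V.orthogonalProjection πw).2
    exact pow_pos (norm_pos_iff.mpr hw0) 2
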